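/- Assume ε_Ω ≤ 1/2 and 2ε_H < Δ, and let Ω̃ be a ground state of the effective Hamiltonian PHP. Then there exists a complex number c with |c| = 1 such that ‖Ω − c·Ω̃‖ ≤ √(2ε_Ω) + √(2 ε_H Δ) / (Δ − 2 ε_H). -/

import Mathlib

/-- Ground-state preservation under projection (Lemma 15 of the paper): let `H` be
a bounded self-adjoint operator on a complex Hilbert space with ground state `Ω`
(`HΩ = 0`, `‖Ω‖ = 1`) and spectral gap `Δ > 0`, and let `P` be an orthogonal
projection with `PΩ ≠ 0`. Set `ε_Ω = 1 - ‖PΩ‖²`, `ε_H = Re⟪PΩ, H(PΩ)⟫/‖PΩ‖²`.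
If `ε_Ω ≤ 1/2` and `2ε_H < Δ`, any ground state `Ω̃` of `PHP` satisfies
`‖Ω - c Ω̃‖ ≤ √(2ε_Ω) + √(2ε_H Δ)/(Δ - 2ε_H)` for some unimodular `c ∈ ℂ`. -/
theorem stmt_14 {E : Type*} [NormedAddCommGroup E] [InnerProductSpace ℂ E]
    [CompleteSpace E]
    (H : E →L[ℂ] E) (hHsa : ∀ ψ χ : E, (inner ℂ (H ψ) χ : ℂ) = inner ℂ ψ (H χ))
    (Ω : E) (hΩnorm : ‖Ω‖ = 1) (hHΩ : H Ω = 0)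
    (Δ : ℝ) (hΔ : 0 < Δ)
    (hgap : ∀ ψ : E, (inner ℂ Ω ψ : ℂ) = 0 →
      Δ * ‖ψ‖ ^ 2 ≤ ((inner ℂ ψ (H ψ) : ℂ)).re)
    (P : E →L[ℂ] E) (hPsa : ∀ ψ χ : E, (inner ℂ (P ψ) χ : ℂ) = inner ℂ ψ (P χ))
    (hPidem : ∀ ψ : E, P (P ψ) = P ψ) (hPΩ : P Ω ≠ 0)
    (hεΩ : 1 - ‖P Ω‖ ^ 2 ≤ 1 / 2)
    (hεH : 2 * (((inner ℂ (P Ω) (H (P Ω)) : ℂ)).re / ‖P Ω‖ ^ 2) < Δ)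
    (Ω' : E) (hΩ'norm : ‖Ω'‖ = 1) (hΩ'P : P Ω' = Ω')
    (hΩ'gs : ∀ ψ : E, ‖ψ‖ = 1 → P ψ = ψ →
      ((inner ℂ Ω' (H Ω') : ℂ)).re ≤ ((inner ℂ ψ (H ψ) : ℂ)).re) :
    ∃ c : ℂ, ‖c‖ = 1 ∧
      ‖Ω - c • Ω'‖ ≤
        Real.sqrt (2 * (1 - ‖P Ω‖ ^ 2)) +
          Real.sqrt (2 * (((inner ℂ (P Ω) (H (P Ω)) : ℂ)).re / ‖P Ω‖ ^ 2) * Δ) /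
            (Δ - 2 * (((inner ℂ (P Ω) (H (P Ω)) : ℂ)).re / ‖P Ω‖ ^ 2)) := by
  set eH : ℝ := ((inner ℂ (P Ω) (H (P Ω)) : ℂ)).re / ‖P Ω‖ ^ 2 with heH
  have hPΩpos : 0 < ‖P Ω‖ := norm_pos_iff.mpr hPΩ
  have hΩΩ : (inner ℂ Ω Ω : ℂ) = 1 := by
    rw [inner_self_eq_norm_sq_to_K, hΩnorm]; norm_num
  -- key decomposition lemma
  have hkey : ∀ χ : E, (inner ℂ Ω (χ - (inner ℂ Ω χ : ℂ) • Ω) : ℂ) = 0 ∧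
      (inner ℂ (χ - (inner ℂ Ω χ : ℂ) • Ω)
        (H (χ - (inner ℂ Ω χ : ℂ) • Ω)) : ℂ) = inner ℂ χ (H χ) := by
    intro χ
    have horth : (inner ℂ Ω (χ - (inner ℂ Ω χ : ℂ) • Ω) : ℂ) = 0 := by
      simp [inner_sub_right, inner_smul_right, hΩΩ, hΩnorm]
    refine ⟨horth, ?_⟩
    have hHφ : H (χ - (inner ℂ Ω χ : ℂ) • Ω) = H χ := by
      simp [map_sub, map_smul, hHΩ]
    have hΩHχ : (inner ℂ Ω (H χ) : ℂ) = 0 := by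
      rw [← hHsa, hHΩ, inner_zero_left]
    rw [hHφ, inner_sub_left, inner_smul_left, hΩHχ]
    ring
  -- positivity of the Hamiltonian
  have hpos : ∀ χ : E, 0 ≤ ((inner ℂ χ (H χ) : ℂ)).re := by
    intro χ
    obtain ⟨h1, h2⟩ := hkey χ
    calc (0:ℝ) ≤ Δ * ‖χ - (inner ℂ Ω χ : ℂ) • Ω‖ ^ 2 := by positivity
    _ ≤ ((inner ℂ (χ - (inner ℂ Ω χ : ℂ) • Ω) (H (χ - (inner ℂ Ω χ : ℂ) • Ω)) : ℂ)).re :=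
        hgap _ h1
    _ = ((inner ℂ χ (H χ) : ℂ)).re := by rw [h2]
  have heHnn : 0 ≤ eH := div_nonneg (hpos _) (by positivity)
  -- the candidate state Ω_P
  have hΩP : ((inner ℂ Ω' (H Ω') : ℂ)).re ≤ eH := by
    have hn : ‖((‖P Ω‖⁻¹ : ℝ) : ℂ) • P Ω‖ = 1 := by
      rw [norm_smul]
      simp [abs_of_pos (inv_pos.mpr hPΩpos)]
      field_simp
    have hp : P (((‖P Ω‖⁻¹ : ℝ) : ℂ) • P Ω) = ((‖P Ω‖⁻¹ : ℝ) : ℂ) • P Ω := by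
      rw [map_smul, hPidem]
    have := hΩ'gs _ hn hp
    refine this.trans (le_of_eq ?_)
    rw [heH]
    have : (inner ℂ (((‖P Ω‖⁻¹ : ℝ) : ℂ) • P Ω) (H (((‖P Ω‖⁻¹ : ℝ) : ℂ) • P Ω)) : ℂ)
        = ((‖P Ω‖⁻¹ * ‖P Ω‖⁻¹ : ℝ) : ℂ) * inner ℂ (P Ω) (H (P Ω)) := by
      rw [map_smul, inner_smul_left, inner_smul_right, Complex.conj_ofReal]
      push_cast
      ring
    rw [this, Complex.re_ofReal_mul, pow_two, div_eq_mul_inv, mul_inv]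
    ring
  -- decompose Ω'
  set a : ℂ := (inner ℂ Ω Ω' : ℂ) with ha
  obtain ⟨h1, h2⟩ := hkey Ω'
  set t : ℝ := ‖a‖ with ht
  have haa : a * (starRingEnd ℂ) a = ((t : ℂ)) ^ 2 := by
    rw [Complex.mul_conj, Complex.normSq_eq_norm_sq, ← ht]
    push_cast; ring
  have hΩ'Ω : (inner ℂ Ω' Ω : ℂ) = (starRingEnd ℂ) a := by
    rw [ha, ← inner_conj_symm]
  have hΩ'Ω' : (inner ℂ Ω' Ω' : ℂ) = 1 := by
    rw [inner_self_eq_norm_sq_to_K, hΩ'norm]; norm_num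
  have hψsq : ‖Ω' - a • Ω‖ ^ 2 = 1 - t ^ 2 := by
    have hinner : (inner ℂ (Ω' - a • Ω) (Ω' - a • Ω) : ℂ) = ((1 - t ^ 2 : ℝ) : ℂ) := by
      rw [inner_sub_left, inner_sub_right, inner_sub_right, inner_smul_left,
        inner_smul_right, inner_smul_left, inner_smul_right, hΩΩ, hΩ'Ω', hΩ'Ω, ← ha]
      push_cast
      linear_combination -haa
    rw [← @inner_self_eq_norm_sq ℂ, hinner]
    simp [← Complex.ofReal_pow]
  have hgapψ : Δ * (1 - t ^ 2) ≤ eH := by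
    have := hgap _ h1
    rw [hψsq] at this
    calc Δ * (1 - t ^ 2) ≤ ((inner ℂ (Ω' - a • Ω) (H (Ω' - a • Ω)) : ℂ)).re := this
    _ = ((inner ℂ Ω' (H Ω') : ℂ)).re := by rw [h2]
    _ ≤ eH := hΩP
  have h1t : 1 - t ^ 2 ≤ eH / Δ := by
    rw [le_div_iff₀ hΔ]; linarith [hgapψ]
  have htpos : 0 < t := by
    have h9 : eH / Δ < 1 / 2 := by rw [div_lt_iff₀ hΔ]; linarith
    have htnn : 0 ≤ t := norm_nonneg a
    nlinarith
  have hane : a ≠ 0 := by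
    intro h; rw [ht, h] at htpos; simp at htpos
  have htle1 : t ≤ 1 := by
    rw [ht]
    calc ‖a‖ ≤ ‖Ω‖ * ‖Ω'‖ := norm_inner_le_norm Ω Ω'
    _ = 1 := by rw [hΩnorm, hΩ'norm]; ring
  -- the phase
  refine ⟨(starRingEnd ℂ) a / (t : ℂ), ?_, ?_⟩
  · rw [norm_div, Complex.norm_conj, Complex.norm_real, Real.norm_eq_abs, abs_of_pos htpos, ← ht,
      div_self htpos.ne']
  set c : ℂ := (starRingEnd ℂ) a / (t : ℂ) with hc
  have htne : (t : ℂ) ≠ 0 := by exact_mod_cast htpos.ne'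
  have hca : c * a = (t : ℂ) := by
    have h10 : (starRingEnd ℂ) a * a = (t : ℂ) ^ 2 := by rw [mul_comm]; exact haa
    rw [hc, div_mul_eq_mul_div, h10, pow_two, mul_div_assoc, div_self htne, mul_one]
  have hcc : (starRingEnd ℂ) c * c = 1 := by
    rw [mul_comm, Complex.mul_conj, Complex.normSq_eq_norm_sq]
    have : ‖c‖ = 1 := by
      rw [hc, norm_div, Complex.norm_conj, Complex.norm_real, Real.norm_eq_abs, abs_of_pos htpos, ← ht,
        div_self htpos.ne']
    rw [this]; norm_num
  have hnormsq : ‖Ω - c • Ω'‖ ^ 2 = 2 - 2 * t := by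
    have h3 : (starRingEnd ℂ) c * (starRingEnd ℂ) a = ((t : ℝ) : ℂ) := by
      rw [← map_mul, hca, Complex.conj_ofReal]
    have hinner : (inner ℂ (Ω - c • Ω') (Ω - c • Ω') : ℂ) = ((2 - 2 * t : ℝ) : ℂ) := by
      rw [inner_sub_left, inner_sub_right, inner_sub_right, inner_smul_left,
        inner_smul_right, inner_smul_left, inner_smul_right, hΩΩ, hΩ'Ω', hΩ'Ω, ← ha]
      push_cast
      linear_combination -hca - h3 + hcc
    rw [← @inner_self_eq_norm_sq ℂ, hinner]
    simp
  have hbound : ‖Ω - c • Ω'‖ ^ 2 ≤ 2 * eH / Δ := by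
    rw [hnormsq]
    have h5 : 2 - 2 * t ≤ 2 * (1 - t ^ 2) := by nlinarith
    have h6 : 2 * (1 - t ^ 2) ≤ 2 * (eH / Δ) := by linarith
    calc 2 - 2 * t ≤ 2 * (eH / Δ) := by linarith
    _ = 2 * eH / Δ := by ring
  have hfinal : ‖Ω - c • Ω'‖ ≤ Real.sqrt (2 * eH / Δ) := by
    have := Real.sqrt_le_sqrt hbound
    rwa [Real.sqrt_sq (norm_nonneg _)] at this
  refine hfinal.trans ?_
  have hden : 0 < Δ - 2 * eH := by linarith
  have hsq : Real.sqrt (2 * eH * Δ) = Real.sqrt (2 * eH / Δ) * Δ := by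
    rw [show 2 * eH * Δ = (2 * eH / Δ) * Δ ^ 2 by field_simp]
    rw [Real.sqrt_mul (by positivity), Real.sqrt_sq hΔ.le]
  have h7 : Real.sqrt (2 * eH / Δ) ≤ Real.sqrt (2 * eH * Δ) / (Δ - 2 * eH) := by
    rw [hsq, le_div_iff₀ hden]
    have : Real.sqrt (2 * eH / Δ) * (Δ - 2 * eH) ≤ Real.sqrt (2 * eH / Δ) * Δ :=
      mul_le_mul_of_nonneg_left (by linarith) (Real.sqrt_nonneg _)
    linarith
  have h8 : 0 ≤ Real.sqrt (2 * (1 - ‖P Ω‖ ^ 2)) := Real.sqrt_nonneg _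
  linarith
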